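/- For all m ≥ 1, if l = m = n, λ_k = 1 for all k < m, η = ξ, and ξ_k > 0 for all k < m, then F(m, m, m, λ, ξ, ξ) = 1 if and only if m = 1. (In particular, the self-similarity equals 1 exactly when the image has a single visual word.) -/

import Mathlib

open Finset

/-- Extend a weight vector on `Fin m` to `ℕ`, zero outside. -/
noncomputable def extW {m : ℕ} (ξ : Fin m → ℝ) (k : ℕ) : ℝ :=
  if h : k < m then ξ ⟨k, h⟩ else 0

/-- The image similarity measurement of Zhang et al. (Eq. 2). -/
noncomputable def F (m n l : ℕ) (lam : Fin l → ℝ) (ξ : Fin m → ℝ) (η : Fin n → ℝ) : ℝ :=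
  (∑ k : Fin l, lam k * extW ξ k * extW η k) /
    (Real.sqrt ((∑ k : Fin m, ξ k) * (∑ k : Fin n, η k)) *
      Real.sqrt ((∑ k : Fin l, (lam k) ^ 2 * extW ξ k * extW η k) +
        (∑ k ∈ Finset.Ico l m, extW ξ k) * (∑ k ∈ Finset.Ico l n, extW η k)))

theorem F_self_eq_one_iff (m : ℕ) (hm : 1 ≤ m)
    (lam : Fin m → ℝ) (ξ : Fin m → ℝ)
    (hlam : ∀ k, lam k = 1) (hξ : ∀ k, 0 < ξ k) :
    F m m m lam ξ ξ = 1 ↔ m = 1 := by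
  have hne : (Finset.univ : Finset (Fin m)).Nonempty := ⟨⟨0, hm⟩, Finset.mem_univ _⟩
  have hS1 : 0 < ∑ k : Fin m, ξ k := Finset.sum_pos (fun k _ => hξ k) hne
  have hS2 : 0 < ∑ k : Fin m, ξ k * ξ k :=
    Finset.sum_pos (fun k _ => mul_pos (hξ k) (hξ k)) hne
  have hext : ∀ k : Fin m, extW ξ (k : ℕ) = ξ k := fun k => by
    simp [extW, k.isLt]
  have hsq : 0 < Real.sqrt (∑ k : Fin m, ξ k * ξ k) := Real.sqrt_pos.mpr hS2
  have hF : F m m m lam ξ ξ =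
      Real.sqrt (∑ k : Fin m, ξ k * ξ k) / (∑ k : Fin m, ξ k) := by
    unfold F
    simp only [hlam, hext, one_mul, one_pow, Finset.Ico_self, Finset.sum_empty,
      mul_zero, zero_mul, add_zero]
    rw [Real.sqrt_mul_self hS1.le]
    rw [div_eq_div_iff (by positivity) hS1.ne']
    rw [show Real.sqrt (∑ k : Fin m, ξ k * ξ k) *
        ((∑ k : Fin m, ξ k) * Real.sqrt (∑ k : Fin m, ξ k * ξ k)) =
        (Real.sqrt (∑ k : Fin m, ξ k * ξ k) * Real.sqrt (∑ k : Fin m, ξ k * ξ k)) *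
        (∑ k : Fin m, ξ k) by ring, Real.mul_self_sqrt hS2.le]
  rw [hF]
  constructor
  · intro h
    by_contra hne1
    have hm2 : 2 ≤ m := by omega
    have hkey : ∀ k : Fin m, ξ k < ∑ j : Fin m, ξ j := by
      intro k
      have : Nontrivial (Fin m) := Fin.nontrivial_iff_two_le.mpr hm2
      rcases exists_ne k with ⟨i, hi⟩
      exact Finset.single_lt_sum hi (Finset.mem_univ k) (Finset.mem_univ i)
        (hξ i) (fun j _ _ => (hξ j).le)
    have hlt : (∑ k : Fin m, ξ k * ξ k) < (∑ k : Fin m, ξ k) * (∑ k : Fin m, ξ k) := by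
      calc (∑ k : Fin m, ξ k * ξ k) < ∑ k : Fin m, ξ k * (∑ j : Fin m, ξ j) :=
            Finset.sum_lt_sum_of_nonempty hne
              (fun k _ => by exact mul_lt_mul_of_pos_left (hkey k) (hξ k))
        _ = (∑ k : Fin m, ξ k) * (∑ j : Fin m, ξ j) := by
            rw [← Finset.sum_mul]
    have h' : Real.sqrt (∑ k : Fin m, ξ k * ξ k) = ∑ k : Fin m, ξ k := by
      field_simp at h
      simpa only [sq] using h
    have : (∑ k : Fin m, ξ k * ξ k) = (∑ k : Fin m, ξ k) * (∑ k : Fin m, ξ k) := by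
      have := congrArg (fun x => x * x) h'
      simpa [Real.mul_self_sqrt hS2.le] using this
    linarith
  · intro h
    subst h
    simp [Fin.sum_univ_one, Real.sqrt_mul_self (hξ 0).le,
      div_self (hξ 0).ne']
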